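/- Let p be a positive integer. For every real x > p-1, the function t ↦ (t·(t-1)⋯(t-p+1))^{1/p} is differentiable at x and its derivative at x is at least 1. -/

import Mathlib

theorem stmt9 (p : ℕ) (hp : 0 < p) (x : ℝ) (hx : (p : ℝ) - 1 < x) :
    DifferentiableAt ℝ
        (fun t : ℝ => (∏ i ∈ Finset.range p, (t - (i : ℝ))) ^ ((1 : ℝ) / (p : ℝ))) x ∧
      1 ≤ deriv (fun t : ℝ => (∏ i ∈ Finset.range p, (t - (i : ℝ))) ^ ((1 : ℝ) / (p : ℝ))) x := by
  have hpos : ∀ i ∈ Finset.range p, 0 < x - (i : ℝ) := by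
    intro i hi
    have : (i : ℝ) + 1 ≤ (p : ℝ) := by exact_mod_cast Finset.mem_range.mp hi
    linarith
  set P : ℝ := ∏ i ∈ Finset.range p, (x - (i : ℝ)) with hPdef
  have hP : 0 < P := Finset.prod_pos hpos
  have hprod : HasDerivAt (fun t : ℝ => ∏ i ∈ Finset.range p, (t - (i : ℝ)))
      (∑ i ∈ Finset.range p, (∏ j ∈ (Finset.range p).erase i, (x - (j : ℝ))) • (1 : ℝ)) x :=
    HasDerivAt.fun_finsetProd (fun i _ => (hasDerivAt_id x).sub_const _)
  have hD : HasDerivAt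
      (fun t : ℝ => (∏ i ∈ Finset.range p, (t - (i : ℝ))) ^ ((1 : ℝ) / (p : ℝ)))
      ((∑ i ∈ Finset.range p, (∏ j ∈ (Finset.range p).erase i, (x - (j : ℝ))) • (1 : ℝ))
        * ((1 : ℝ) / (p : ℝ)) * P ^ ((1 : ℝ) / (p : ℝ) - 1)) x :=
    hprod.rpow_const (Or.inl hP.ne')
  refine ⟨hD.differentiableAt, ?_⟩
  rw [hD.deriv]
  have hp' : (0 : ℝ) < (p : ℝ) := by exact_mod_cast hp
  set S : ℝ := ∑ i ∈ Finset.range p, (x - (i : ℝ))⁻¹ with hSdef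
  have herase : ∀ i ∈ Finset.range p,
      ∏ j ∈ (Finset.range p).erase i, (x - (j : ℝ)) = P * (x - (i : ℝ))⁻¹ := by
    intro i hi
    have h := Finset.mul_prod_erase (Finset.range p) (fun j => x - (j : ℝ)) hi
    field_simp
    rw [eq_div_iff (hpos i hi).ne', mul_comm]
    exact h
  have hsum : (∑ i ∈ Finset.range p, (∏ j ∈ (Finset.range p).erase i, (x - (j : ℝ))) • (1 : ℝ))
      = P * S := by
    rw [hSdef, Finset.mul_sum]
    refine Finset.sum_congr rfl fun i hi => ?_
    rw [smul_eq_mul, mul_one, herase i hi]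
  rw [hsum]
  have hPr : 0 < P ^ ((1 : ℝ) / (p : ℝ)) := Real.rpow_pos_of_pos hP _
  -- AM-GM : (P ^ (1/p))⁻¹ ≤ (1/p) * S
  have key : (P ^ ((1 : ℝ) / (p : ℝ)))⁻¹ ≤ (1 / (p : ℝ)) * S := by
    have hAM := Real.geom_mean_le_arith_mean_weighted (Finset.range p)
      (fun _ => (1 : ℝ) / (p : ℝ)) (fun i => (x - (i : ℝ))⁻¹)
      (fun i _ => by positivity)
      (by simp [Finset.sum_const, Finset.card_range]; field_simp)
      (fun i hi => (inv_nonneg.mpr (hpos i hi).le))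
    have hleft : (∏ i ∈ Finset.range p, ((x - (i : ℝ))⁻¹) ^ ((1 : ℝ) / (p : ℝ)))
        = (P ^ ((1 : ℝ) / (p : ℝ)))⁻¹ := by
      rw [Real.finset_prod_rpow _ _ (fun i hi => inv_nonneg.mpr (hpos i hi).le),
        Finset.prod_inv_distrib, Real.inv_rpow hP.le]
    have hright : (∑ i ∈ Finset.range p, (1 / (p : ℝ)) * (x - (i : ℝ))⁻¹)
        = (1 / (p : ℝ)) * S := by
      rw [hSdef, Finset.mul_sum]
    rw [hleft, hright] at hAM
    exact hAM
  calc (1 : ℝ) = P ^ ((1 : ℝ) / (p : ℝ)) * (P ^ ((1 : ℝ) / (p : ℝ)))⁻¹ :=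
        (mul_inv_cancel₀ hPr.ne').symm
    _ ≤ P ^ ((1 : ℝ) / (p : ℝ)) * ((1 / (p : ℝ)) * S) :=
        mul_le_mul_of_nonneg_left key hPr.le
    _ = P * S * ((1 : ℝ) / (p : ℝ)) * P ^ ((1 : ℝ) / (p : ℝ) - 1) := by
        rw [Real.rpow_sub_one hP.ne']
        field_simp
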